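/- Σ_{M ∈ GL_2(F_2)} 2^{dim Eig_1(M^T ⊗ M^T ⊗ M^{-1})} = 2⁸ + 3·2⁴ + 2·2² = 312, and 312 / |GL_2(F_2)| = 312 / 6 = 52. -/
import Mathlib


open Matrix Kronecker

variable {K : Type*} [Field K] {n : ℕ}

/-- The multiplication of the algebra `alg(M)` on `K^n`:
`e_i * e_j = ∑ k, (M i) j k • e_k`. -/
def algMul (M : Fin n → Matrix (Fin n) (Fin n) K) (x y : Fin n → K) : Fin n → K :=
  fun k => ∑ i, ∑ j, x i * y j * M i j k

/-- The right action `φ` of `GL n K` on tuples of matrices: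
`φ(M, G)_l = G⁻¹ (∑ i, G_{il} M_i) G`. -/
def phi (M : Fin n → Matrix (Fin n) (Fin n) K) (G : GL (Fin n) K) :
    Fin n → Matrix (Fin n) (Fin n) K :=
  fun l => (↑G⁻¹ : Matrix (Fin n) (Fin n) K) *
    (∑ i, (G : Matrix (Fin n) (Fin n) K) i l • M i) * (G : Matrix (Fin n) (Fin n) K)

/-- Dimension of the eigenspace of `Mᵀ ⊗ Mᵀ ⊗ M⁻¹` for the eigenvalue 1. -/
noncomputable def eigdim (M : GL (Fin n) K) : ℕ :=
  Module.finrank K ↥(Module.End.eigenspace (Matrix.toLin'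
    ((M : Matrix (Fin n) (Fin n) K)ᵀ ⊗ₖ
      ((M : Matrix (Fin n) (Fin n) K)ᵀ ⊗ₖ (↑M⁻¹ : Matrix (Fin n) (Fin n) K)))) 1)

lemma pow_eigdim_eq_card (M : GL (Fin 2) (ZMod 2)) :
    2 ^ eigdim M = Fintype.card {x : Fin 2 × Fin 2 × Fin 2 → ZMod 2 //
      ((M : Matrix (Fin 2) (Fin 2) (ZMod 2))ᵀ ⊗ₖ
        ((M : Matrix (Fin 2) (Fin 2) (ZMod 2))ᵀ ⊗ₖ
          (↑M⁻¹ : Matrix (Fin 2) (Fin 2) (ZMod 2)))) *ᵥ x = x} := by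
  set B := ((M : Matrix (Fin 2) (Fin 2) (ZMod 2))ᵀ ⊗ₖ
        ((M : Matrix (Fin 2) (Fin 2) (ZMod 2))ᵀ ⊗ₖ
          (↑M⁻¹ : Matrix (Fin 2) (Fin 2) (ZMod 2)))) with hB
  have : Fintype ↥(Module.End.eigenspace (Matrix.toLin' B) 1) := Fintype.ofFinite _
  have h := Module.card_eq_pow_finrank (K := ZMod 2)
    (V := ↥(Module.End.eigenspace (Matrix.toLin' B) 1))
  rw [ZMod.card] at h
  rw [eigdim, ← hB, ← h]
  exact Fintype.card_congr (Equiv.subtypeEquivRight fun x => by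
    simp [Module.End.mem_eigenspace_iff, Matrix.toLin'_apply])

set_option maxRecDepth 100000 in
set_option maxHeartbeats 4000000 in
lemma sum_card_eq :
    (∑ M : GL (Fin 2) (ZMod 2), Fintype.card {x : Fin 2 × Fin 2 × Fin 2 → ZMod 2 //
      ((M : Matrix (Fin 2) (Fin 2) (ZMod 2))ᵀ ⊗ₖ
        ((M : Matrix (Fin 2) (Fin 2) (ZMod 2))ᵀ ⊗ₖ
          (↑M⁻¹ : Matrix (Fin 2) (Fin 2) (ZMod 2)))) *ᵥ x = x}) = 312 := by
  decide

set_option maxRecDepth 10000 in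
lemma card_gl2 : Nat.card (GL (Fin 2) (ZMod 2)) = 6 := by
  rw [Nat.card_eq_fintype_card]
  decide

/-- `∑_{M ∈ GL₂(F₂)} 2^(dim Eig₁(Mᵀ⊗Mᵀ⊗M⁻¹)) = 2⁸ + 3·2⁴ + 2·2² = 312`, and
`312 / |GL₂(F₂)| = 312 / 6 = 52`. -/
theorem burnside_sum_f2 :
    (∑ M : GL (Fin 2) (ZMod 2), 2 ^ eigdim M = 2 ^ 8 + 3 * 2 ^ 4 + 2 * 2 ^ 2) ∧
    (2 ^ 8 + 3 * 2 ^ 4 + 2 * 2 ^ 2 = 312) ∧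
    Nat.card (GL (Fin 2) (ZMod 2)) = 6 ∧
    312 / Nat.card (GL (Fin 2) (ZMod 2)) = 52 := by
  refine ⟨?_, by norm_num, card_gl2, by rw [card_gl2]⟩
  calc ∑ M : GL (Fin 2) (ZMod 2), 2 ^ eigdim M
      = ∑ M : GL (Fin 2) (ZMod 2), Fintype.card {x : Fin 2 × Fin 2 × Fin 2 → ZMod 2 //
        ((M : Matrix (Fin 2) (Fin 2) (ZMod 2))ᵀ ⊗ₖ
          ((M : Matrix (Fin 2) (Fin 2) (ZMod 2))ᵀ ⊗ₖ
            (↑M⁻¹ : Matrix (Fin 2) (Fin 2) (ZMod 2)))) *ᵥ x = x} :=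
        Finset.sum_congr rfl fun M _ => pow_eigdim_eq_card M
    _ = 312 := sum_card_eq
    _ = 2 ^ 8 + 3 * 2 ^ 4 + 2 * 2 ^ 2 := by norm_num
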